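/- Let n ≥ 1 and let P be an n × n matrix over 𝔽₂ with P Pᵀ = I. Let G be the bipartite graph on vertex set V = L ⊔ R (two disjoint copies of Fin n) in which l_a ∈ L is adjacent to r_b ∈ R if and only if P a b = 1, and there are no other edges. Then for every subset D ⊆ R, the iterated odd neighbourhood satisfies Odd(Odd(D)) = D. -/

import Mathlib

open Matrix

lemma odd_iff_cast (m : ℕ) : Odd m ↔ (m : ZMod 2) = 1 := by
  rw [Nat.odd_iff, ← ZMod.natCast_mod m 2]
  rcases Nat.mod_two_eq_zero_or_one m with h | h <;> rw [h] <;> simp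

lemma zmod2_cases (x : ZMod 2) : x = 0 ∨ x = 1 := by revert x; decide

lemma cast_ncard {n : ℕ} (s : Set (Fin n)) [DecidablePred (· ∈ s)] :
    ((s.ncard : ZMod 2)) = ∑ a : Fin n, if a ∈ s then 1 else 0 := by
  classical
  rw [Set.ncard_eq_toFinset_card']
  have h : s.toFinset = Finset.univ.filter (fun a => a ∈ s) := by ext; simp
  rw [h, Finset.sum_boole]

/-- The bipartite graph on `Fin n ⊕ Fin n` (left copy `L = Sum.inl`, right copy
`R = Sum.inr`) in which `Sum.inl a` is adjacent to `Sum.inr b` iff `P a b = 1`,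
and there are no other edges. -/
def bipGraph (n : ℕ) (P : Matrix (Fin n) (Fin n) (ZMod 2)) :
    SimpleGraph (Fin n ⊕ Fin n) where
  Adj u v := (∃ a b, P a b = 1 ∧ u = Sum.inl a ∧ v = Sum.inr b) ∨
             (∃ a b, P a b = 1 ∧ u = Sum.inr b ∧ v = Sum.inl a)
  symm := by
    constructor
    rintro u v (⟨a, b, h, rfl, rfl⟩ | ⟨a, b, h, rfl, rfl⟩)
    · exact Or.inr ⟨a, b, h, rfl, rfl⟩
    · exact Or.inl ⟨a, b, h, rfl, rfl⟩
  loopless := by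
    constructor
    rintro u (⟨a, b, h, rfl, h2⟩ | ⟨a, b, h, rfl, h2⟩) <;> simp at h2

/-- The odd neighbourhood of a set `S`: the set of vertices `v` such that the number
of neighbours of `v` lying in `S` is odd. -/
def oddNbhd {V : Type*} (G : SimpleGraph V) (S : Set V) : Set V :=
  {v | Odd (G.neighborSet v ∩ S).ncard}

lemma nbl {n : ℕ} (P : Matrix (Fin n) (Fin n) (ZMod 2)) (a : Fin n) :
    (bipGraph n P).neighborSet (Sum.inl a) = Sum.inr '' {b | P a b = 1} := by
  ext v
  simp only [SimpleGraph.mem_neighborSet, bipGraph, Set.mem_image, Set.mem_setOf_eq]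
  constructor
  · rintro (⟨a', b, h, ha, rfl⟩ | ⟨a', b, h, ha, hv⟩)
    · obtain rfl : a = a' := by injection ha
      exact ⟨b, h, rfl⟩
    · simp at ha
  · rintro ⟨b, h, rfl⟩
    exact Or.inl ⟨a, b, h, rfl, rfl⟩

lemma nbr {n : ℕ} (P : Matrix (Fin n) (Fin n) (ZMod 2)) (b : Fin n) :
    (bipGraph n P).neighborSet (Sum.inr b) = Sum.inl '' {a | P a b = 1} := by
  ext v
  simp only [SimpleGraph.mem_neighborSet, bipGraph, Set.mem_image, Set.mem_setOf_eq]
  constructor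
  · rintro (⟨a', b', h, ha, hv⟩ | ⟨a', b', h, hb, rfl⟩)
    · simp at ha
    · obtain rfl : b = b' := by injection hb
      exact ⟨a', h, rfl⟩
  · rintro ⟨a, h, rfl⟩
    exact Or.inr ⟨a, b, h, rfl, rfl⟩

/-- if `P Pᵀ = I` then for every subset `D` of the right bipartition `R`,
the iterated odd neighbourhood satisfies `Odd(Odd(D)) = D`. -/
theorem stmt0 (n : ℕ) (hn : 1 ≤ n) (P : Matrix (Fin n) (Fin n) (ZMod 2))
    (hP : P * Pᵀ = 1) (D : Set (Fin n ⊕ Fin n)) (hD : D ⊆ Set.range Sum.inr) :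
    oddNbhd (bipGraph n P) (oddNbhd (bipGraph n P) D) = D := by
  classical
  have hPtP : Pᵀ * P = 1 := mul_eq_one_comm.mp hP
  set D₀ : Set (Fin n) := Sum.inr ⁻¹' D with hD₀
  have hDeq : D = Sum.inr '' D₀ := by
    ext v; constructor
    · intro hv; obtain ⟨b, rfl⟩ := hD hv; exact ⟨b, hv, rfl⟩
    · rintro ⟨b, hb, rfl⟩; exact hb
  set A : Set (Fin n) := {a | Odd (({b' | P a b' = 1} ∩ D₀).ncard)} with hA
  -- characterize the first odd neighbourhood
  have h1 : oddNbhd (bipGraph n P) D = Sum.inl '' A := by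
    ext v
    cases v with
    | inl a =>
      simp only [oddNbhd, Set.mem_setOf_eq, nbl, hDeq,
        ← Set.image_inter Sum.inr_injective,
        Set.ncard_image_of_injective _ Sum.inr_injective]
      simp [hA]
    | inr b =>
      have he : (bipGraph n P).neighborSet (Sum.inr b) ∩ D = ∅ := by
        rw [nbr]
        ext v
        simp only [Set.mem_inter_iff, Set.mem_image, Set.mem_empty_iff_false, iff_false]
        rintro ⟨⟨a, _, rfl⟩, hv⟩
        obtain ⟨b', hb'⟩ := hD hv
        simp at hb'
      simp [oddNbhd, he, Nat.odd_iff]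
  -- the key parity computation
  have key : ∀ b : Fin n, Odd (({a | P a b = 1} ∩ A).ncard) ↔ b ∈ D₀ := by
    intro b
    rw [odd_iff_cast, cast_ncard]
    have step : (∑ a : Fin n, if a ∈ {a | P a b = 1} ∩ A then (1 : ZMod 2) else 0)
        = ∑ a : Fin n, ∑ b' : Fin n, (if b' ∈ D₀ then 1 else 0) * (P a b * P a b') := by
      refine Finset.sum_congr rfl fun a _ => ?_
      have hind : (if a ∈ {a | P a b = 1} ∩ A then (1 : ZMod 2) else 0)
          = P a b * ((({b' | P a b' = 1} ∩ D₀).ncard : ZMod 2)) := by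
        rcases zmod2_cases (P a b) with h0 | h1
        · have hcond : a ∉ {a | P a b = 1} ∩ A := by
            rintro ⟨h, -⟩
            rw [Set.mem_setOf_eq, h0] at h
            exact absurd h (by decide)
          rw [if_neg hcond, h0, zero_mul]
        · by_cases hAa : a ∈ A
          · have : ((({b' | P a b' = 1} ∩ D₀).ncard : ZMod 2)) = 1 :=
              (odd_iff_cast _).mp hAa
            simp [Set.mem_inter_iff, Set.mem_setOf_eq, h1, hAa, this]
          · have : ((({b' | P a b' = 1} ∩ D₀).ncard : ZMod 2)) = 0 := by
              rcases zmod2_cases ((({b' | P a b' = 1} ∩ D₀).ncard : ZMod 2)) with h | h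
              · exact h
              · exact absurd ((odd_iff_cast _).mpr h) hAa
            simp [Set.mem_inter_iff, Set.mem_setOf_eq, hAa, this]
      rw [hind, cast_ncard, Finset.mul_sum]
      refine Finset.sum_congr rfl fun b' _ => ?_
      rcases zmod2_cases (P a b') with h | h <;> by_cases hb' : b' ∈ D₀ <;>
        simp [Set.mem_inter_iff, Set.mem_setOf_eq, h, hb'] <;> ring_nf <;>
        simp [h]
    rw [step, Finset.sum_comm]
    have : (∑ b' : Fin n, ∑ a : Fin n, (if b' ∈ D₀ then (1:ZMod 2) else 0) * (P a b * P a b'))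
        = ∑ b' : Fin n, (if b' ∈ D₀ then 1 else 0) * (if b = b' then 1 else 0) := by
      refine Finset.sum_congr rfl fun b' _ => ?_
      rw [← Finset.mul_sum]
      congr 1
      have := congrArg (fun M => M b b') hPtP
      simpa [Matrix.mul_apply, Matrix.transpose_apply, Matrix.one_apply] using this
    rw [this, Finset.sum_eq_single b (fun b' _ hne => by simp [Ne.symm hne])
      (fun h => absurd (Finset.mem_univ b) h)]
    by_cases hb : b ∈ D₀ <;> simp [hb] <;> decide
  -- conclude
  ext v
  cases v with
  | inl a =>
    have he : (bipGraph n P).neighborSet (Sum.inl a) ∩ oddNbhd (bipGraph n P) D = ∅ := by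
      rw [nbl, h1]
      ext v
      simp only [Set.mem_inter_iff, Set.mem_image, Set.mem_empty_iff_false, iff_false]
      rintro ⟨⟨b, _, rfl⟩, ⟨a', _, h⟩⟩
      simp at h
    have hnd : Sum.inl a ∉ D := fun h => by obtain ⟨b, hb⟩ := hD h; simp at hb
    change Odd (((bipGraph n P).neighborSet (Sum.inl a) ∩ oddNbhd (bipGraph n P) D).ncard) ↔ _
    rw [he]
    simp [hnd, Nat.odd_iff]
  | inr b =>
    have hss : (bipGraph n P).neighborSet (Sum.inr b) ∩ oddNbhd (bipGraph n P) D
        = Sum.inl '' ({a | P a b = 1} ∩ A) := by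
      rw [nbr, h1, Set.image_inter Sum.inl_injective]
    change Odd (((bipGraph n P).neighborSet (Sum.inr b) ∩ oddNbhd (bipGraph n P) D).ncard) ↔ _
    rw [hss, Set.ncard_image_of_injective _ Sum.inl_injective, key]
    exact Iff.rfl
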